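/- arXiv:1110.4266 — 4 statements merged into one kernel-verified Lean document; each statement's English description precedes it below -/
import Mathlib

section
/- Let a_1, …, a_12 be pairwise distinct complex numbers and let p(u) = ∏_{i=1}^{12} (u − a_i) ∈ ℂ[u]. Then there is no point (u, x, y, z) ∈ ℂ⁴ with (x, y, z) ≠ (0, 0, 0) at which all five of the following vanish simultaneously: f₀ = y²z − x³ − p(u)z³, ∂f₀/∂x = −3x², ∂f₀/∂y = 2yz, ∂f₀/∂z = y² − 3p(u)z², and ∂f₀/∂u = −p′(u)z³. That is, the hypersurface y²z = x³ + p(u)z³ is smooth on the chart 𝔸¹ × ℙ². -/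
open Polynomial

/-- The chart-`W₀` Jacobian computation: for pairwise distinct `a₁, …, a₁₂ ∈ ℂ` and
`p(u) = ∏ (u - aᵢ)`, the hypersurface `y²z = x³ + p(u)z³` is smooth on `𝔸¹ × ℙ²`:
there is no point `(u, x, y, z)` with `(x, y, z) ≠ (0,0,0)` at which `f₀` and all four
partial derivatives vanish simultaneously. -/
theorem stmt_0 (a : Fin 12 → ℂ) (ha : Function.Injective a)
    (p : Polynomial ℂ) (hp : p = ∏ i : Fin 12, (X - C (a i))) :
    ¬ ∃ u x y z : ℂ, (x, y, z) ≠ (0, 0, 0) ∧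
      y ^ 2 * z - x ^ 3 - p.eval u * z ^ 3 = 0 ∧
      -3 * x ^ 2 = 0 ∧
      2 * y * z = 0 ∧
      y ^ 2 - 3 * p.eval u * z ^ 2 = 0 ∧
      -(p.derivative.eval u) * z ^ 3 = 0 := by
  rintro ⟨u, x, y, z, hne, h0, hx, hy, hz, hu⟩
  have hx0 : x = 0 := by
    have := pow_eq_zero_iff (n := 2) (by norm_num) |>.mp
      (by linear_combination (-1/3 : ℂ) * hx)
    exact this
  by_cases hz0 : z = 0
  · have hy0 : y = 0 := by
      have : y ^ 2 = 0 := by rw [hz0] at hz; linear_combination hz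
      exact pow_eq_zero_iff (n := 2) (by norm_num) |>.mp this
    exact hne (by simp [hx0, hy0, hz0])
  · have hy0 : y = 0 := by
      rcases mul_eq_zero.mp hy with h | h
      · rcases mul_eq_zero.mp h with h | h
        · norm_num at h
        · exact h
      · exact absurd h hz0
    have hpu : p.eval u = 0 := by
      rw [hy0] at hz
      have h3 : (3 : ℂ) * p.eval u * z ^ 2 = 0 := by linear_combination -hz
      rcases mul_eq_zero.mp h3 with h | h
      · rcases mul_eq_zero.mp h with h | h
        · norm_num at h
        · exact h
      · exact absurd (pow_eq_zero_iff (n := 2) (by norm_num) |>.mp h) hz0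
    have hpu' : p.derivative.eval u = 0 := by
      rcases mul_eq_zero.mp hu with h | h
      · exact neg_eq_zero.mp h
      · exact absurd (pow_eq_zero_iff (n := 3) (by norm_num) |>.mp h) hz0
    have hsep : p.Separable := by
      rw [hp]; exact (separable_prod_X_sub_C_iff).mpr ha
    obtain ⟨A, B, hAB⟩ := hsep
    have := congrArg (Polynomial.eval u) hAB
    simp [hpu, hpu'] at this
end

section
/- Let a_1, …, a_12 be pairwise distinct complex numbers and let q(u) = ∏_{i=1}^{12} (1 − a_i u) ∈ ℂ[u]. Then there is no point (u, x, y, z) ∈ ℂ⁴ with (x, y, z) ≠ (0, 0, 0) at which all five of the following vanish simultaneously: f₁ = y²z − x³ − q(u)z³, ∂f₁/∂x = −3x², ∂f₁/∂y = 2yz, ∂f₁/∂z = y² − 3q(u)z², and ∂f₁/∂u = −q′(u)z³. That is, the hypersurface y²z = x³ + q(u)z³ is smooth on the chart 𝔸¹ × ℙ². -/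
open Polynomial

/-- The chart-`W₁` Jacobian computation: for pairwise distinct `a₁, …, a₁₂ ∈ ℂ` and
`q(u) = ∏ (1 - aᵢ u)`, the hypersurface `y²z = x³ + q(u)z³` is smooth on `𝔸¹ × ℙ²`. -/
theorem stmt_1 (a : Fin 12 → ℂ) (ha : Function.Injective a)
    (q : Polynomial ℂ) (hq : q = ∏ i : Fin 12, (1 - C (a i) * X)) :
    ¬ ∃ u x y z : ℂ, (x, y, z) ≠ (0, 0, 0) ∧
      y ^ 2 * z - x ^ 3 - q.eval u * z ^ 3 = 0 ∧
      -3 * x ^ 2 = 0 ∧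
      2 * y * z = 0 ∧
      y ^ 2 - 3 * q.eval u * z ^ 2 = 0 ∧
      -(q.derivative.eval u) * z ^ 3 = 0 := by
  rintro ⟨u, x, y, z, hne, hf, hx, hy, hz, hu⟩
  have hx0 : x = 0 := by
    have h2 : x ^ 2 = 0 := by linear_combination (-1/3 : ℂ) * hx
    exact pow_eq_zero_iff (n := 2) (by norm_num) |>.mp h2
  rcases eq_or_ne z 0 with hz0 | hz0
  · have hy0 : y = 0 := by
      have h2 : y ^ 2 = 0 := by rw [hz0] at hz; linear_combination hz
      exact pow_eq_zero_iff (n := 2) (by norm_num) |>.mp h2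
    exact hne (by simp [hx0, hy0, hz0])
  · have hy0 : y = 0 := by
      rcases mul_eq_zero.mp hy with h | h
      · rcases mul_eq_zero.mp h with h | h
        · norm_num at h
        · exact h
      · exact absurd h hz0
    have hqe : q.eval u = 0 := by
      have h2 : 3 * q.eval u * z ^ 2 = 0 := by rw [hy0] at hz; linear_combination -hz
      rcases mul_eq_zero.mp h2 with h | h
      · rcases mul_eq_zero.mp h with h | h
        · norm_num at h
        · exact h
      · exact absurd (pow_eq_zero_iff (n := 2) (by norm_num) |>.mp h) hz0
    have hdu : q.derivative.eval u = 0 := by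
      rcases mul_eq_zero.mp hu with h | h
      · exact neg_eq_zero.mp h
      · exact absurd (pow_eq_zero_iff (n := 3) (by norm_num) |>.mp h) hz0
    rw [hq, eval_prod] at hqe
    obtain ⟨k, -, hk⟩ := Finset.prod_eq_zero_iff.mp hqe
    simp only [eval_sub, eval_mul, eval_one, eval_C, eval_X] at hk
    have hk' : a k * u = 1 := (sub_eq_zero.mp hk).symm
    have hak : a k ≠ 0 := by intro h; rw [h, zero_mul] at hk'; exact one_ne_zero hk'.symm
    have hu0 : u ≠ 0 := by intro h; rw [h, mul_zero] at hk'; exact one_ne_zero hk'.symm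
    have hsplit : q = (1 - C (a k) * X) * ∏ j ∈ Finset.univ.erase k, (1 - C (a j) * X) := by
      rw [hq, ← Finset.mul_prod_erase _ _ (Finset.mem_univ k)]
    have hd : q.derivative.eval u ≠ 0 := by
      rw [hsplit, derivative_mul, eval_add, eval_mul, eval_mul]
      have h1 : eval u (1 - C (a k) * X) = 0 := by
        simp only [eval_sub, eval_mul, eval_one, eval_C, eval_X]; exact hk
      have h2 : eval u (derivative (1 - C (a k) * X)) = -(a k) := by
        simp [derivative_sub, derivative_C_mul]
      rw [h1, zero_mul, add_zero, h2]
      apply mul_ne_zero (neg_ne_zero.mpr hak)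
      rw [eval_prod]
      apply Finset.prod_ne_zero_iff.mpr
      intro j hj hcon
      simp only [eval_sub, eval_mul, eval_one, eval_C, eval_X] at hcon
      have hju : a j * u = 1 := (sub_eq_zero.mp hcon).symm
      have : a j = a k := mul_right_cancel₀ hu0 (hju.trans hk'.symm)
      exact (Finset.mem_erase.mp hj).1 (ha this)
    exact hd hdu
end

section
/- Let A, B ∈ ℂ[u] be polynomials such that the polynomial 4A³ + 27B² is nonzero and has no repeated roots. Then the affine Weierstrass surface {(u, x, y) ∈ ℂ³ : y² = x³ + A(u)x + B(u)} is smooth: there is no point (u, x, y) ∈ ℂ³ at which all four of y² − x³ − A(u)x − B(u), 2y, 3x² + A(u), and A′(u)x + B′(u) vanish simultaneously. -/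
open Polynomial

/-- If `4A³ + 27B²` is a nonzero polynomial with no repeated roots, then the affine
Weierstrass surface `y² = x³ + A(u)x + B(u)` in `ℂ³` is smooth: the defining equation
and its three partial derivatives have no common zero. -/
theorem stmt_3 (A B : Polynomial ℂ)
    (hne : 4 * A ^ 3 + 27 * B ^ 2 ≠ 0)
    (hsf : Squarefree (4 * A ^ 3 + 27 * B ^ 2)) :
    ¬ ∃ u x y : ℂ,
      y ^ 2 - x ^ 3 - A.eval u * x - B.eval u = 0 ∧
      2 * y = 0 ∧
      3 * x ^ 2 + A.eval u = 0 ∧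
      A.derivative.eval u * x + B.derivative.eval u = 0 := by
  rintro ⟨u, x, y, h1, h2, h3, h4⟩
  set P := 4 * A ^ 3 + 27 * B ^ 2 with hP
  have hy : y = 0 := by linear_combination h2 / 2
  have hA : A.eval u = -3 * x ^ 2 := by linear_combination h3
  have hB : B.eval u = 2 * x ^ 3 := by
    rw [hy] at h1; linear_combination -h1 - x * h3
  have hPeval : P.eval u = 0 := by
    simp only [hP, eval_add, eval_mul, eval_pow, eval_ofNat, hA, hB]; ring
  have hP'eval : P.derivative.eval u = 0 := by
    have hd : P.derivative = 12 * A ^ 2 * A.derivative + 54 * B * B.derivative := by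
      rw [hP]
      simp [derivative_pow, map_ofNat]
      ring
    rw [hd]
    simp only [eval_add, eval_mul, eval_pow, eval_ofNat, hA, hB]
    linear_combination (108 * x ^ 3) * h4
  have hsep : P.Separable := (PerfectField.separable_iff_squarefree).2 hsf
  obtain ⟨a, b, hab⟩ := hsep
  have h := congrArg (Polynomial.eval u) hab
  simp [hPeval, hP'eval] at h
end

section
/- Let a_1, …, a_12 be pairwise distinct complex numbers, let K ∈ ℂ be nonzero, let c, δ ∈ ℂ satisfy c³ = K² and δ³ = −27/4, and set p(t) = ∏_{i=1}^{12} (t − a_i) ∈ ℂ[t]. Suppose the polynomial p + 2K has no repeated roots. Then there is no point (u, x, y) ∈ ℂ³ at which all four of y² − x³ − cδ·x − (p(u) + K), 2y, 3x² + cδ, and p′(u) vanish simultaneously; that is, the affine Weierstrass surface y² = x³ + cδ·x + (p(u) + K) over the chart U₀ is smooth. -/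
open Polynomial

lemma sep_no_common_root {q : ℂ[X]} (h : q.Separable) {u : ℂ}
    (h1 : q.eval u = 0) (h2 : q.derivative.eval u = 0) : False := by
  obtain ⟨A, B, hab⟩ := h
  have := congrArg (eval u) hab
  simp [h1, h2] at this

/-- Smoothness of the elliptic K3 surface `X_{(aᵢ),K}` on the chart `U₀`: with
`c³ = K²`, `δ³ = -27/4`, `p(t) = ∏ (t - aᵢ)` and `p + 2K` squarefree, the affine
Weierstrass surface `y² = x³ + cδ·x + (p(u) + K)` is smooth. -/
theorem stmt_10 (a : Fin 12 → ℂ) (ha : Function.Injective a) (K : ℂ) (hK : K ≠ 0)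
    (c δ : ℂ) (hc : c ^ 3 = K ^ 2) (hδ : δ ^ 3 = -27 / 4)
    (p : Polynomial ℂ) (hp : p = ∏ i : Fin 12, (X - C (a i)))
    (hsf : Squarefree (p + C (2 * K))) :
    ¬ ∃ u x y : ℂ,
      y ^ 2 - x ^ 3 - c * δ * x - (p.eval u + K) = 0 ∧
      2 * y = 0 ∧
      3 * x ^ 2 + c * δ = 0 ∧
      p.derivative.eval u = 0 := by
  rintro ⟨u, x, y, h1, h2, h3, h4⟩
  have hpK : p.eval u + K = 2 * x ^ 3 := by
    linear_combination -h1 + (y / 2) * h2 - x * h3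
  have e1 : (c * δ) ^ 3 = K ^ 2 * (-27 / 4) := by rw [mul_pow, hc, hδ]
  have e2 : (c * δ) ^ 3 = -27 * x ^ 6 := by
    have hcd : c * δ = -3 * x ^ 2 := by linear_combination h3
    rw [hcd]; ring
  have hK2 : K ^ 2 = 4 * x ^ 6 := by linear_combination (4 / 27) * e1 - (4 / 27) * e2
  have hmul : p.eval u * (p.eval u + 2 * K) = 0 := by
    linear_combination (p.eval u + K + 2 * x ^ 3) * hpK - hK2
  rcases mul_eq_zero.mp hmul with h | h
  · have hsep : p.Separable := by
      rw [hp]; exact separable_prod_X_sub_C_iff.mpr ha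
    exact sep_no_common_root hsep h h4
  · have hsep : (p + C (2 * K)).Separable := PerfectField.separable_iff_squarefree.mpr hsf
    refine sep_no_common_root (u := u) hsep ?_ ?_
    · simpa using h
    · simpa using h4
end
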